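/- There exists a recursively enumerable equivalence relation E on ℕ such that no complement of E in the lattice of equivalence relations is recursively enumerable: for every equivalence relation F with E ⊓ F = ⊥ and E ⊔ F = ⊤, the predicate fun p : ℕ × ℕ => F relates p.1 p.2 is not r.e. -/

import Mathlib

open Computable Part Nat.Partrec.Code

theorem REPred.and' {α} [Primcodable α] {p q : α → Prop} (hp : REPred p) (hq : REPred q) :
    REPred fun a => p a ∧ q a := by
  have := hp.bind (hq.comp Computable.fst).to₂
  refine this.of_eq fun a => Part.ext fun u => ?_
  simp [Part.mem_assert_iff, Part.mem_bind_iff]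

theorem REPred.or' {α} [Primcodable α] {p q : α → Prop} (hp : REPred p) (hq : REPred q) :
    REPred fun a => p a ∨ q a := by
  obtain ⟨k, pk, hk⟩ := Partrec.merge' hp hq
  refine pk.dom_re.of_eq fun a => ?_
  rw [(hk a).2]
  simp [Part.assert]

theorem REPred.comp' {α β} [Primcodable α] [Primcodable β] {p : β → Prop} {f : α → β}
    (hp : REPred p) (hf : Computable f) : REPred fun a => p (f a) := hp.comp hf

theorem REPred.exists' {α} [Primcodable α] {q : α × ℕ → Prop} (hq : REPred q) :
    REPred fun a => ∃ n, q (a, n) := by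
  have hnat : Nat.Partrec fun n =>
      Part.bind (Encodable.decode (α := α × ℕ) n) fun x =>
        (Part.assert (q x) fun _ => Part.some ()).map Encodable.encode := hq
  obtain ⟨c, hc⟩ := exists_code.1 hnat
  have hF : Computable₂ fun (a : α) (k : ℕ) =>
      evaln k.unpair.1 c (Encodable.encode (a, k.unpair.2)) := by
    have h1 : Computable fun p : α × ℕ =>
        ((p.2.unpair.1, c), Encodable.encode (p.1, p.2.unpair.2)) := by
      apply Computable.pair
      · exact Computable.pair (Primrec.to_comp (Primrec.fst.comp (Primrec.unpair.comp Primrec.snd)))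
          (Computable.const c)
      · exact Computable.encode.comp (Computable.pair Computable.fst
          (Primrec.to_comp (Primrec.snd.comp (Primrec.unpair.comp Primrec.snd))))
    exact (primrec_evaln.to_comp.comp h1)
  have := (Partrec.rfindOpt hF).dom_re
  refine this.of_eq fun a => ?_
  rw [Nat.rfindOpt_dom]
  constructor
  · rintro ⟨k, v, hv⟩
    refine ⟨k.unpair.2, ?_⟩
    have hv' : v ∈ eval c (Encodable.encode (a, k.unpair.2)) := evaln_sound hv
    rw [hc] at hv'
    simp [Part.mem_bind_iff, Part.mem_assert_iff] at hv'
    exact hv'.1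
  · rintro ⟨n, hn⟩
    have : (Encodable.encode ()) ∈ eval c (Encodable.encode (a, n)) := by
      rw [hc]; simp [Part.mem_bind_iff, Part.mem_assert_iff, hn]; exact ⟨(), rfl⟩
    obtain ⟨k, hk⟩ := evaln_complete.1 this
    exact ⟨Nat.pair k n, Encodable.encode (), by
      simpa [Nat.unpair_pair] using hk⟩

/-- A predicate is recursively enumerable (r.e.); `RePred` is Mathlib's name for it. -/
abbrev REPred' {α : Type} [Primcodable α] (p : α → Prop) : Prop := REPred p

section Construction

/-- The diagonal-ish halting predicate on ℕ. -/
private def hp (m : ℕ) : Prop := (eval (Denumerable.ofNat Nat.Partrec.Code m) 0).Dom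

private theorem hp_re : REPred hp :=
  ((ComputablePred.halting_problem_re 0).comp (Computable.ofNat Nat.Partrec.Code) : _)

private theorem hp_compl_not_re : ¬ REPred fun m => ¬ hp m := by
  intro h
  apply ComputablePred.halting_problem_not_re 0
  have := h.comp' (Computable.encode (α := Nat.Partrec.Code))
  refine this.of_eq fun c => ?_
  simp [hp, Denumerable.ofNat_encode]

private theorem hp_zero : hp (Encodable.encode Nat.Partrec.Code.zero) := by
  simp [hp, Denumerable.ofNat_encode, eval]
  trivial

/-- `A x` : x is twice a halting code. -/
private def A (x : ℕ) : Prop := x % 2 = 0 ∧ hp (x / 2)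

private theorem A_two_mul {m : ℕ} : A (2 * m) ↔ hp m := by
  unfold A
  constructor
  · rintro ⟨-, h⟩; rwa [Nat.mul_div_cancel_left m (by norm_num)] at h
  · intro h; exact ⟨by omega, by rwa [Nat.mul_div_cancel_left m (by norm_num)]⟩

private theorem A_re : REPred A := by
  have h1 : REPred fun x : ℕ => x % 2 = 0 := by
    refine ComputablePred.to_re ⟨inferInstance, ?_⟩
    exact Primrec.to_comp (Primrec.eq.comp
      (Primrec.nat_mod.comp Primrec.id (Primrec.const 2)) (Primrec.const 0)).decide
  have h2 : REPred fun x : ℕ => hp (x / 2) :=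
    hp_re.comp' (Primrec.to_comp (Primrec.nat_div.comp Primrec.id (Primrec.const 2)))
  exact h1.and' h2

/-- The r.e. equivalence relation: one class collecting `2·(halting codes)`. -/
private def Ee : Setoid ℕ :=
  ⟨fun x y => x = y ∨ (A x ∧ A y),
    ⟨fun _ => Or.inl rfl,
     fun h => h.elim (fun e => Or.inl e.symm) (fun h => Or.inr ⟨h.2, h.1⟩),
     fun h1 h2 => by
       rcases h1 with rfl | h1
       · exact h2
       · rcases h2 with rfl | h2
         · exact Or.inr h1
         · exact Or.inr ⟨h1.1, h2.2⟩⟩⟩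

private theorem Ee_re : REPred fun p : ℕ × ℕ => Ee.r p.1 p.2 := by
  have h1 : REPred fun p : ℕ × ℕ => p.1 = p.2 := by
    refine ComputablePred.to_re ⟨inferInstance, ?_⟩
    exact Primrec.to_comp (Primrec.eq.comp Primrec.fst Primrec.snd).decide
  have h2 : REPred fun p : ℕ × ℕ => A p.1 ∧ A p.2 :=
    (A_re.comp' Computable.fst).and' (A_re.comp' Computable.snd)
  exact h1.or' h2

end Construction

/-- There is a recursively enumerable equivalence relation on ℕ none of whose
complements in the lattice `Setoid ℕ` is recursively enumerable. -/
theorem re_without_re_complement :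
    ∃ E : Setoid ℕ,
      REPred' (fun p : ℕ × ℕ => E.r p.1 p.2) ∧
      ∀ F : Setoid ℕ, IsCompl E F → ¬ REPred' (fun p : ℕ × ℕ => F.r p.1 p.2) := by
  refine ⟨Ee, Ee_re, fun F hFc hFre => ?_⟩
  have h1 : Ee ⊓ F = ⊥ := hFc.inf_eq_bot
  have h2 : Ee ⊔ F = ⊤ := hFc.sup_eq_top
  -- the key equivalence
  have key : ∀ n : ℕ, ¬ hp n ↔ ∃ m, hp m ∧ ¬ (m = n) ∧ F.r (2 * n) (2 * m) := by
    intro n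
    constructor
    · intro hnp
      -- invariant setoid
      set C : ℕ → Prop := fun x => A x ∨ ∃ z, A z ∧ F.r x z with hC
      let G : Setoid ℕ :=
        ⟨fun x y => C x ↔ C y, ⟨fun _ => Iff.rfl, Iff.symm, Iff.trans⟩⟩
      have hEG : Ee ≤ G := by
        intro x y h
        show C x ↔ C y
        rcases h with rfl | ⟨hax, hay⟩
        · exact Iff.rfl
        · exact iff_of_true (Or.inl hax) (Or.inl hay)
      have hFG : F ≤ G := by
        intro x y h
        show C x ↔ C y
        constructor
        · rintro (hax | ⟨z, haz, hxz⟩)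
          · exact Or.inr ⟨x, hax, F.symm' h⟩
          · exact Or.inr ⟨z, haz, F.trans' (F.symm' h) hxz⟩
        · rintro (hay | ⟨z, haz, hyz⟩)
          · exact Or.inr ⟨y, hay, h⟩
          · exact Or.inr ⟨z, haz, F.trans' h hyz⟩
      have hTop : (⊤ : Setoid ℕ) ≤ G := h2 ▸ sup_le hEG hFG
      have hG : ∀ x y : ℕ, C x ↔ C y := fun x y =>
        (hTop (x := x) (y := y) trivial : C x ↔ C y)
      have hC0 : C (2 * Encodable.encode Nat.Partrec.Code.zero) :=
        Or.inl (A_two_mul.2 hp_zero)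
      have hCn : C (2 * n) := (hG _ _).2 hC0
      rcases hCn with hA2n | ⟨z, haz, hfz⟩
      · exact absurd (A_two_mul.1 hA2n) hnp
      · have hz : 2 * (z / 2) = z := Nat.mul_div_cancel' (Nat.dvd_of_mod_eq_zero haz.1)
        refine ⟨z / 2, A_two_mul.1 (by rw [hz]; exact haz), ?_, by rw [hz]; exact hfz⟩
        intro e
        apply hnp
        apply A_two_mul.1
        rw [e] at hz
        rw [← hz] at haz
        exact haz
    · rintro ⟨m, hpm, hmn, hf⟩ hpn
      have hE : Ee.r (2 * n) (2 * m) := Or.inr ⟨A_two_mul.2 hpn, A_two_mul.2 hpm⟩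
      have hinf : (Ee ⊓ F) (2 * n) (2 * m) := ⟨hE, hf⟩
      rw [h1] at hinf
      have : (2 : ℕ) * n = 2 * m := hinf
      omega
  -- the complement of hp would be r.e.
  apply hp_compl_not_re
  have hq : REPred fun q : ℕ × ℕ => hp q.2 ∧ ¬ (q.2 = q.1) ∧ F.r (2 * q.1) (2 * q.2) := by
    have ha : REPred fun q : ℕ × ℕ => hp q.2 := hp_re.comp' Computable.snd
    have hb : REPred fun q : ℕ × ℕ => ¬ (q.2 = q.1) := by
      refine ComputablePred.to_re ⟨inferInstance, ?_⟩
      exact Primrec.to_comp (PrimrecPred.not (Primrec.eq.comp Primrec.snd Primrec.fst)).decide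
    have hc : REPred fun q : ℕ × ℕ => F.r (2 * q.1) (2 * q.2) := by
      have hm : Computable fun q : ℕ × ℕ => (2 * q.1, 2 * q.2) :=
        Primrec.to_comp (Primrec.pair
          (Primrec.nat_mul.comp (Primrec.const 2) Primrec.fst)
          (Primrec.nat_mul.comp (Primrec.const 2) Primrec.snd))
      exact (hFre.comp' hm).of_eq fun q => Iff.rfl
    exact ha.and' (hb.and' hc)
  exact hq.exists'.of_eq fun n => (key n).symm
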